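/- Let k₀ ∈ L²([0,1]²) be a stochastic kernel whose integral operator L₀ : L² → L² satisfies the mixing condition (A1), and let f₀ be the unique fixed point of L₀ with ∫ f₀ dm = 1. Fix 0 < l < 1. Let c ∈ L² with ⟨c, f₀⟩ = 0, and let w ∈ L² satisfy ⟨w, f₀⟩ = 0 and w − L₀* w = c (i.e. w = (Id − L₀*)⁻¹ c, where L₀* is the Hilbert adjoint of L₀). Assume there exists Ξ' ⊆ Ξ(F_l) with m(Ξ') > 0 such that for every y ∈ Ξ': f₀(y) > 0, ∫_{F_l^y} w⁺ dm > 0 and ∫_{F_l^y} w⁻ dm > 0. Define M(x,y) := 𝟙_{F_l}(x,y) · f₀(y) · ( w(x) − (1/m(F_l^y)) ∫_{F_l^y} w(z) dz ) and α := ‖M‖_{L²([0,1]²)}. Then α > 0, k̂ := M/α belongs to V_ker ∩ S_{k₀,l} with ‖k̂‖_{L²([0,1]²)} = 1, and k̂ is the unique maximizer of the functional J(k) := ∫₀¹∫₀¹ w(x) k(x,y) f₀(y) dy dx over the set {k ∈ V_ker ∩ S_{k₀,l} : ‖k‖_{L²([0,1]²)} = 1}. (For k in this set, J(k) equals ⟨c,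 (Id − L₀)⁻¹ ∫₀¹ k(·,y) f₀(y) dy⟩, the linear response of the expectation of the observable c.) -/

import Mathlib

open MeasureTheory
open scoped RealInnerProductSpace

/-- Lebesgue measure restricted to the unit interval `[0,1]`. -/
noncomputable def μ01 : Measure ℝ := volume.restrict (Set.Icc (0 : ℝ) 1)

/-- Two-dimensional Lebesgue measure restricted to the unit square `[0,1]²`. -/
noncomputable def ν01 : Measure (ℝ × ℝ) := μ01.prod μ01

/-- The region `F_l ⊆ [0,1]²` where the kernel `k₀` is at least `l`. -/
def Fset (k₀ : ℝ × ℝ → ℝ) (l : ℝ) : Set (ℝ × ℝ) :=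
  {p | p ∈ Set.Icc (0 : ℝ) 1 ×ˢ Set.Icc (0 : ℝ) 1 ∧ l ≤ k₀ p}

/-- The `y`-section `F_l^y = {x ∈ [0,1] : (x,y) ∈ F_l}`. -/
def Fsec (k₀ : ℝ × ℝ → ℝ) (l : ℝ) (y : ℝ) : Set ℝ :=
  {x | (x, y) ∈ Fset k₀ l}

/-- `Ξ(F_l)`: the set of `y ∈ [0,1]` whose section `F_l^y` has positive measure. -/
def XiF (k₀ : ℝ × ℝ → ℝ) (l : ℝ) : Set ℝ :=
  {y | y ∈ Set.Icc (0 : ℝ) 1 ∧ 0 < μ01 (Fsec k₀ l y)}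

/-- The (un-normalized) optimal kernel perturbation
`M(x,y) = 𝟙_{F_l}(x,y) f₀(y) (w(x) − (1/m(F_l^y)) ∫_{F_l^y} w)`. -/
noncomputable def Mopt (k₀ : ℝ × ℝ → ℝ) (l : ℝ) (f₀ w : ℝ → ℝ) : ℝ × ℝ → ℝ :=
  (Fset k₀ l).indicator fun p =>
    f₀ p.2 * (w p.1 - (∫ z in Fsec k₀ l p.2, w z ∂μ01) / (μ01 (Fsec k₀ l p.2)).toReal)

/-- The feasible set `{k ∈ V_ker ∩ S_{k₀,l} : ‖k‖₂ = 1}`. -/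
def feasSet (k₀ : ℝ × ℝ → ℝ) (l : ℝ) : Set (Lp ℝ 2 ν01) :=
  {k : Lp ℝ 2 ν01 |
    (∀ᵐ y ∂μ01, ∫ x, k (x, y) ∂μ01 = 0) ∧
    (∀ᵐ p ∂ν01, p ∉ Fset k₀ l → k p = 0) ∧ ‖k‖ = 1}

/-- The objective `J(k) = ∫∫ w(x) k(x,y) f₀(y) dy dx`. -/
noncomputable def Jobj (w f₀ : ℝ → ℝ) (k : Lp ℝ 2 ν01) : ℝ :=
  ∫ x, (∫ y, w x * k (x, y) * f₀ y ∂μ01) ∂μ01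

namespace OptPert

open scoped ENNReal

lemma nu_eq : ν01 = μ01.prod μ01 := rfl

instance : IsFiniteMeasure μ01 := by
  constructor
  rw [μ01, Measure.restrict_apply_univ]
  simp [Real.volume_Icc]

instance : IsFiniteMeasure ν01 := by unfold ν01; infer_instance

lemma ae_swap {P : ℝ × ℝ → Prop} (h : ∀ᵐ p ∂ν01, P p) :
    ∀ᵐ y ∂μ01, ∀ᵐ x ∂μ01, P (x, y) := by
  have hmp : MeasurePreserving Prod.swap ν01 ν01 :=
    Measure.measurePreserving_swap (μ := μ01) (ν := μ01)
  have hs : ∀ᵐ q ∂ν01, P (Prod.swap q) := hmp.quasiMeasurePreserving.ae h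
  exact Measure.ae_ae_of_ae_prod hs

lemma ae_snd {Q : ℝ → Prop} (h : ∀ᵐ y ∂μ01, Q y) : ∀ᵐ p ∂ν01, Q p.2 := by
  rw [ae_iff] at h ⊢
  obtain ⟨N, hsub, hmN, hN0⟩ := exists_measurable_superset_of_null h
  refine measure_mono_null (t := (Set.univ : Set ℝ) ×ˢ N) (fun p hp => ?_) ?_
  · exact Set.mem_prod.2 ⟨trivial, hsub hp⟩
  · rw [nu_eq, Measure.prod_prod, hN0, mul_zero]

lemma integrable_mul {α : Type*} [MeasurableSpace α] {μ : Measure α} {g1 g2 : α → ℝ}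
    (h1 : MemLp g1 2 μ) (h2 : MemLp g2 2 μ) : Integrable (fun x => g1 x * g2 x) μ := by
  have hpqr : (1 : ℝ≥0∞) / 1 = 1 / 2 + 1 / 2 := by
    simp [ENNReal.div_add_div_same, ENNReal.div_self, ENNReal.inv_two_add_inv_two]
  have h := MemLp.smul (E := ℝ) (𝕜 := ℝ) (r := 1) h2 h1
  rw [memLp_one_iff_integrable] at h
  exact h

def sec (F : Set (ℝ × ℝ)) (y : ℝ) : Set ℝ := {x | (x, y) ∈ F}

noncomputable def Gc (F : Set (ℝ × ℝ)) (w : ℝ → ℝ) (y : ℝ) : ℝ :=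
  (∫ z in sec F y, w z ∂μ01) / (μ01 (sec F y)).toReal

noncomputable def MM (F : Set (ℝ × ℝ)) (f w : ℝ → ℝ) : ℝ × ℝ → ℝ :=
  F.indicator fun p => f p.2 * (w p.1 - Gc F w p.2)

variable {F : Set (ℝ × ℝ)} {w f : ℝ → ℝ}

lemma sec_meas (hF : MeasurableSet F) (y : ℝ) : MeasurableSet (sec F y) :=
  hF.preimage (measurable_prodMk_right)

lemma indicator_section (g : ℝ × ℝ → ℝ) (x y : ℝ) :
    F.indicator g (x, y) = (sec F y).indicator (fun x' => g (x', y)) x := by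
  by_cases h : (x, y) ∈ F <;> simp [Set.indicator, sec, h]

lemma Gc_mul (y : ℝ) : Gc F w y * (μ01 (sec F y)).toReal = ∫ z in sec F y, w z ∂μ01 := by
  rcases eq_or_ne (μ01 (sec F y)) 0 with h0 | h0
  · rw [Gc, h0]
    simp [Measure.restrict_eq_zero.mpr h0]
  · rw [Gc, div_mul_cancel₀]
    exact ENNReal.toReal_ne_zero.mpr ⟨h0, measure_ne_top _ _⟩

section Core
variable (hF : MeasurableSet F) (hwm : StronglyMeasurable w) (hw : MemLp w 2 μ01)
  (hfm : StronglyMeasurable f) (hf : MemLp f 2 μ01)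

lemma intW (hw : MemLp w 2 μ01) : Integrable w μ01 := hw.integrable (by norm_num)

lemma intW2 (hwm : StronglyMeasurable w) (hw : MemLp w 2 μ01) :
    Integrable (fun z => w z ^ 2) μ01 :=
  (memLp_two_iff_integrable_sq hwm.aestronglyMeasurable).mp hw

lemma int_sub_sq (hwm : StronglyMeasurable w) (hw : MemLp w 2 μ01) (c : ℝ) :
    Integrable (fun x => (w x - c) ^ 2) μ01 := by
  have h : Integrable (fun x => w x ^ 2 - 2 * c * w x + c ^ 2) μ01 :=
    ((intW2 hwm hw).sub ((intW hw).const_mul (2 * c))).add (integrable_const _)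
  exact h.congr (Filter.Eventually.of_forall fun x => by ring)

lemma sq_int_sec (hwm : StronglyMeasurable w) (hw : MemLp w 2 μ01) (y : ℝ) :
    ∫ x in sec F y, (w x - Gc F w y) ^ 2 ∂μ01
      = (∫ x in sec F y, w x ^ 2 ∂μ01) - Gc F w y ^ 2 * (μ01 (sec F y)).toReal := by
  set c := Gc F w y with hc
  have h1 : (fun x => (w x - c) ^ 2) = fun x => (w x ^ 2 - 2 * c * w x) + c ^ 2 := by
    funext x; ring
  have I1 : Integrable (fun x => w x ^ 2 - 2 * c * w x) (μ01.restrict (sec F y)) :=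
    ((intW2 hwm hw).restrict).sub (((intW hw).restrict).const_mul (2 * c))
  have I2 : Integrable (fun x : ℝ => 2 * c * w x) (μ01.restrict (sec F y)) :=
    ((intW hw).restrict).const_mul (2 * c)
  rw [h1, integral_add I1 (integrable_const _),
    integral_sub ((intW2 hwm hw).restrict) I2,
    integral_const_mul, setIntegral_const, ← Gc_mul (F := F) (w := w) y, ← hc]
  simp only [smul_eq_mul, measureReal_def]
  ring

lemma sec_sq_le (hwm : StronglyMeasurable w) (hw : MemLp w 2 μ01) (y : ℝ) :
    ∫ x in sec F y, (w x - Gc F w y) ^ 2 ∂μ01 ≤ ∫ z, w z ^ 2 ∂μ01 := by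
  rw [sq_int_sec hwm hw y]
  have h1 : ∫ x in sec F y, w x ^ 2 ∂μ01 ≤ ∫ z, w z ^ 2 ∂μ01 :=
    setIntegral_le_integral (intW2 hwm hw) (Filter.Eventually.of_forall fun x => sq_nonneg _)
  nlinarith [sq_nonneg (Gc F w y), ENNReal.toReal_nonneg (a := μ01 (sec F y))]

lemma Gsq_le (hwm : StronglyMeasurable w) (hw : MemLp w 2 μ01) (y : ℝ) :
    Gc F w y ^ 2 * (μ01 (sec F y)).toReal ≤ ∫ z, w z ^ 2 ∂μ01 := by
  have h0 : 0 ≤ ∫ x in sec F y, (w x - Gc F w y) ^ 2 ∂μ01 :=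
    integral_nonneg fun x => sq_nonneg _
  rw [sq_int_sec hwm hw y] at h0
  have h1 : ∫ x in sec F y, w x ^ 2 ∂μ01 ≤ ∫ z, w z ^ 2 ∂μ01 :=
    setIntegral_le_integral (intW2 hwm hw) (Filter.Eventually.of_forall fun x => sq_nonneg _)
  linarith

lemma measurable_Gc (hF : MeasurableSet F) (hwm : StronglyMeasurable w) :
    Measurable (Gc F w) := by
  have h1 : StronglyMeasurable (fun p : ℝ × ℝ => F.indicator (fun q => w q.1) p) :=
    (hwm.comp_measurable measurable_fst).indicator hF
  have h2 := h1.integral_prod_left' (μ := μ01)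
  have h3 : (fun y => ∫ x, F.indicator (fun q : ℝ × ℝ => w q.1) (x, y) ∂μ01)
      = fun y => ∫ z in sec F y, w z ∂μ01 := by
    funext y
    rw [show (fun x => F.indicator (fun q : ℝ × ℝ => w q.1) (x, y))
        = (sec F y).indicator w from funext fun x => indicator_section _ x y]
    exact integral_indicator (sec_meas hF y)
  rw [h3] at h2
  exact h2.measurable.div ((measurable_measure_prodMk_right hF).ennreal_toReal)

lemma sm_MM (hF : MeasurableSet F) (hwm : StronglyMeasurable w) (hfm : StronglyMeasurable f) :
    StronglyMeasurable (MM F f w) := by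
  refine StronglyMeasurable.indicator ?_ hF
  exact ((hfm.comp_measurable measurable_snd).mul
    ((hwm.comp_measurable measurable_fst).sub
      (((measurable_Gc hF hwm).comp measurable_snd).stronglyMeasurable)))

lemma int_sec_MM (hF : MeasurableSet F) (hw : MemLp w 2 μ01) (y : ℝ) :
    ∫ x, MM F f w (x, y) ∂μ01 = 0 := by
  rw [show (fun x => MM F f w (x, y))
      = (sec F y).indicator (fun x => f y * (w x - Gc F w y)) from
      funext fun x => indicator_section _ x y]
  rw [integral_indicator (sec_meas hF y), integral_const_mul,
    integral_sub ((intW hw).restrict) (integrable_const _), setIntegral_const]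
  simp only [smul_eq_mul, measureReal_def]
  rw [← Gc_mul (F := F) (w := w) y]
  ring


lemma MM_sq_eq (y : ℝ) : (fun x => MM F f w (x, y) ^ 2)
    = (sec F y).indicator (fun x => f y ^ 2 * (w x - Gc F w y) ^ 2) := by
  funext x
  rw [show MM F f w (x, y)
      = (sec F y).indicator (fun x => f y * (w x - Gc F w y)) x from
      indicator_section _ x y]
  by_cases h : x ∈ sec F y <;> simp [h, mul_pow]

lemma sq_MM_section (hF : MeasurableSet F) (y : ℝ) :
    ∫ x, MM F f w (x, y) ^ 2 ∂μ01
      = f y ^ 2 * ∫ x in sec F y, (w x - Gc F w y) ^ 2 ∂μ01 := by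
  rw [MM_sq_eq, integral_indicator (sec_meas hF y), integral_const_mul]

lemma int_MM_sq (hF : MeasurableSet F) (hwm : StronglyMeasurable w) (hw : MemLp w 2 μ01)
    (hfm : StronglyMeasurable f) (hf : MemLp f 2 μ01) :
    Integrable (fun p => MM F f w p ^ 2) ν01 := by
  rw [nu_eq]
  have hsm : AEStronglyMeasurable (fun p => MM F f w p ^ 2) (μ01.prod μ01) :=
    (((sm_MM hF hwm hfm).measurable.pow_const 2).stronglyMeasurable).aestronglyMeasurable
  refine (integrable_prod_iff' hsm).mpr ⟨Filter.Eventually.of_forall fun y => ?_, ?_⟩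
  · rw [MM_sq_eq]
    exact ((int_sub_sq hwm hw (Gc F w y)).const_mul _).indicator (sec_meas hF y)
  · have hsm2 : AEStronglyMeasurable (fun y => ∫ x, MM F f w (x, y) ^ 2 ∂μ01) μ01 :=
      (((sm_MM hF hwm hfm).measurable.pow_const 2).stronglyMeasurable).integral_prod_left'
        |>.aestronglyMeasurable
    have hbound : Integrable (fun y => f y ^ 2 * ∫ z, w z ^ 2 ∂μ01) μ01 :=
      (intW2 hfm hf).mul_const _
    refine (Integrable.mono' hbound ?_ ?_)
    · refine hsm2.congr (Filter.Eventually.of_forall fun y => ?_)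
      exact integral_congr_ae (Filter.Eventually.of_forall fun x =>
        (Real.norm_of_nonneg (sq_nonneg _)).symm)
    · refine Filter.Eventually.of_forall fun y => ?_
      have h0 : 0 ≤ ∫ x, ‖MM F f w (x, y) ^ 2‖ ∂μ01 := integral_nonneg fun x => norm_nonneg _
      rw [Real.norm_of_nonneg h0]
      have he : ∫ x, ‖MM F f w (x, y) ^ 2‖ ∂μ01 = ∫ x, MM F f w (x, y) ^ 2 ∂μ01 :=
        integral_congr_ae (Filter.Eventually.of_forall fun x =>
          Real.norm_of_nonneg (sq_nonneg _))
      rw [he, sq_MM_section hF y]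
      exact mul_le_mul_of_nonneg_left (sec_sq_le hwm hw y) (sq_nonneg _)

lemma mem_MM (hF : MeasurableSet F) (hwm : StronglyMeasurable w) (hw : MemLp w 2 μ01)
    (hfm : StronglyMeasurable f) (hf : MemLp f 2 μ01) :
    MemLp (MM F f w) 2 ν01 :=
  (memLp_two_iff_integrable_sq (sm_MM hF hwm hfm).aestronglyMeasurable).mpr
    (int_MM_sq hF hwm hw hfm hf)

noncomputable def FG (F : Set (ℝ × ℝ)) (f w : ℝ → ℝ) : ℝ × ℝ → ℝ :=
  F.indicator fun p => f p.2 * Gc F w p.2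

lemma FG_sq_eq (y : ℝ) : (fun x => FG F f w (x, y) ^ 2)
    = (sec F y).indicator (fun _ => f y ^ 2 * Gc F w y ^ 2) := by
  funext x
  rw [show FG F f w (x, y)
      = (sec F y).indicator (fun _ => f y * Gc F w y) x from indicator_section _ x y]
  by_cases h : x ∈ sec F y <;> simp [h, mul_pow]

lemma sm_FG (hF : MeasurableSet F) (hwm : StronglyMeasurable w) (hfm : StronglyMeasurable f) :
    StronglyMeasurable (FG F f w) :=
  ((hfm.comp_measurable measurable_snd).mul
    (((measurable_Gc hF hwm).comp measurable_snd).stronglyMeasurable)).indicator hF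

lemma mem_FG (hF : MeasurableSet F) (hwm : StronglyMeasurable w) (hw : MemLp w 2 μ01)
    (hfm : StronglyMeasurable f) (hf : MemLp f 2 μ01) :
    MemLp (FG F f w) 2 ν01 := by
  refine (memLp_two_iff_integrable_sq (sm_FG hF hwm hfm).aestronglyMeasurable).mpr ?_
  rw [nu_eq]
  have hsm : AEStronglyMeasurable (fun p => FG F f w p ^ 2) (μ01.prod μ01) :=
    (((sm_FG hF hwm hfm).measurable.pow_const 2).stronglyMeasurable).aestronglyMeasurable
  refine (integrable_prod_iff' hsm).mpr ⟨Filter.Eventually.of_forall fun y => ?_, ?_⟩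
  · rw [FG_sq_eq]
    exact (integrable_const _).indicator (sec_meas hF y)
  · have hsm2 : AEStronglyMeasurable (fun y => ∫ x, FG F f w (x, y) ^ 2 ∂μ01) μ01 :=
      (((sm_FG hF hwm hfm).measurable.pow_const 2).stronglyMeasurable).integral_prod_left'
        |>.aestronglyMeasurable
    have hbound : Integrable (fun y => f y ^ 2 * ∫ z, w z ^ 2 ∂μ01) μ01 :=
      (intW2 hfm hf).mul_const _
    refine (Integrable.mono' hbound ?_ ?_)
    · refine hsm2.congr (Filter.Eventually.of_forall fun y => ?_)
      exact integral_congr_ae (Filter.Eventually.of_forall fun x =>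
        (Real.norm_of_nonneg (sq_nonneg _)).symm)
    · refine Filter.Eventually.of_forall fun y => ?_
      have h0 : 0 ≤ ∫ x, ‖FG F f w (x, y) ^ 2‖ ∂μ01 := integral_nonneg fun x => norm_nonneg _
      rw [Real.norm_of_nonneg h0]
      have he : ∫ x, ‖FG F f w (x, y) ^ 2‖ ∂μ01 = ∫ x, FG F f w (x, y) ^ 2 ∂μ01 :=
        integral_congr_ae (Filter.Eventually.of_forall fun x =>
          Real.norm_of_nonneg (sq_nonneg _))
      rw [he, FG_sq_eq, integral_indicator (sec_meas hF y), setIntegral_const, smul_eq_mul, measureReal_def]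
      nlinarith [mul_nonneg (sq_nonneg (f y)) (sub_nonneg.mpr (Gsq_le (F := F) hwm hw y))]


lemma mem_WF (hwm : StronglyMeasurable w) (hw : MemLp w 2 μ01)
    (hfm : StronglyMeasurable f) (hf : MemLp f 2 μ01) :
    MemLp (fun p : ℝ × ℝ => w p.1 * f p.2) 2 ν01 := by
  refine (memLp_two_iff_integrable_sq
    (((hwm.comp_measurable measurable_fst).mul
      (hfm.comp_measurable measurable_snd)).aestronglyMeasurable)).mpr ?_
  rw [nu_eq]
  exact ((intW2 hwm hw).mul_prod (intW2 hfm hf)).congr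
    (Filter.Eventually.of_forall fun p => by simp [mul_pow])

lemma J_eq (hF : MeasurableSet F) (hwm : StronglyMeasurable w) (hw : MemLp w 2 μ01)
    (hfm : StronglyMeasurable f) (hf : MemLp f 2 μ01) (k : Lp ℝ 2 ν01)
    (hk0 : ∀ᵐ y ∂μ01, ∫ x, k (x, y) ∂μ01 = 0)
    (hkF : ∀ᵐ p ∂ν01, p ∉ F → k p = 0) :
    ∫ p, MM F f w p * k p ∂ν01 = ∫ x, ∫ y, w x * k (x, y) * f y ∂μ01 ∂μ01 := by
  have hkm : MemLp (⇑k) 2 ν01 := Lp.memLp k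
  have hI1 : Integrable (fun p => (w p.1 * f p.2) * k p) ν01 :=
    integrable_mul (mem_WF hwm hw hfm hf) hkm
  have hI2 : Integrable (fun p => FG F f w p * k p) ν01 :=
    integrable_mul (mem_FG hF hwm hw hfm hf) hkm
  have hsplit : ∀ᵐ p ∂ν01,
      MM F f w p * k p = (w p.1 * f p.2) * k p - FG F f w p * k p := by
    filter_upwards [hkF] with p hp
    by_cases hmem : p ∈ F
    · simp only [MM, FG, Set.indicator_of_mem hmem]
      ring
    · simp [MM, FG, Set.indicator_of_notMem hmem, hp hmem]
  rw [integral_congr_ae hsplit, integral_sub hI1 hI2]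
  have hT2 : ∫ p, FG F f w p * k p ∂ν01 = 0 := by
    have hpr := integral_prod_symm (μ := μ01) (ν := μ01) (fun p => FG F f w p * k p) hI2
    refine hpr.trans ?_
    refine integral_eq_zero_of_ae ?_
    filter_upwards [ae_swap hkF, hk0] with y hy hy0
    have hptw : ∀ x, FG F f w (x, y) * k (x, y)
        = (f y * Gc F w y) * ((sec F y).indicator (fun x' => k (x', y)) x) := by
      intro x
      rw [show FG F f w (x, y)
          = (sec F y).indicator (fun _ => f y * Gc F w y) x from indicator_section _ x y]
      by_cases h : x ∈ sec F y <;> simp [h]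
    rw [integral_congr_ae (Filter.Eventually.of_forall hptw), integral_const_mul]
    have hind : (sec F y).indicator (fun x' => k (x', y)) =ᵐ[μ01] fun x => k (x, y) := by
      filter_upwards [hy] with x hx
      by_cases h : x ∈ sec F y
      · simp [h]
      · simp [h, hx h]
    rw [integral_congr_ae hind, hy0, mul_zero]
    rfl
  rw [hT2, sub_zero]
  have hpr : ∫ p, (w p.1 * f p.2) * k p ∂ν01
      = ∫ x, ∫ y, (w x * f y) * k (x, y) ∂μ01 ∂μ01 :=
    integral_prod (μ := μ01) (ν := μ01) (fun p => (w p.1 * f p.2) * k p) hI1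
  rw [hpr]
  refine integral_congr_ae (Filter.Eventually.of_forall fun x => ?_)
  exact integral_congr_ae (Filter.Eventually.of_forall fun y => by ring)

end Core
end OptPert

open OptPert

/-- Explicit formula for the unique kernel perturbation maximising
the linear response of the expectation of an observable `c`. -/
theorem optimal_kernel_perturbation_for_expectation
    (k₀ : ℝ × ℝ → ℝ) (hk₀L2 : MemLp k₀ 2 ν01)
    (hk₀nonneg : ∀ᵐ p ∂ν01, 0 ≤ k₀ p)
    (hk₀stoch : ∀ᵐ y ∂μ01, ∫ x, k₀ (x, y) ∂μ01 = 1)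
    (L₀ : Lp ℝ 2 μ01 →L[ℝ] Lp ℝ 2 μ01)
    (hL₀ : ∀ f : Lp ℝ 2 μ01, ∀ᵐ x ∂μ01, (L₀ f) x = ∫ y, k₀ (x, y) * f y ∂μ01)
    (hmix : ∀ g : Lp ℝ 2 μ01, (∫ x, g x ∂μ01) = 0 →
      Filter.Tendsto (fun n : ℕ => ‖(L₀ ^ n) g‖) Filter.atTop (nhds 0))
    (f₀ : Lp ℝ 2 μ01) (hf₀fix : L₀ f₀ = f₀) (hf₀int : ∫ x, f₀ x ∂μ01 = 1)
    (l : ℝ) (hl0 : 0 < l) (hl1 : l < 1)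
    (c : Lp ℝ 2 μ01) (hc : ⟪c, f₀⟫ = 0)
    (w : Lp ℝ 2 μ01) (hwf₀ : ⟪w, f₀⟫ = 0)
    (hwc : w - (ContinuousLinearMap.adjoint L₀) w = c)
    (Ξ' : Set ℝ) (hΞ'sub : Ξ' ⊆ XiF k₀ l) (hΞ'pos : 0 < volume Ξ')
    (hf₀pos : ∀ y ∈ Ξ', 0 < f₀ y)
    (hwpos : ∀ y ∈ Ξ', 0 < ∫ x in Fsec k₀ l y, max (w x) 0 ∂μ01)
    (hwneg : ∀ y ∈ Ξ', 0 < ∫ x in Fsec k₀ l y, max (-(w x)) 0 ∂μ01) :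
    0 < (eLpNorm (Mopt k₀ l f₀ w) 2 ν01).toReal ∧
    ∃ khat : Lp ℝ 2 ν01,
      (∀ᵐ p ∂ν01, khat p =
        Mopt k₀ l f₀ w p / (eLpNorm (Mopt k₀ l f₀ w) 2 ν01).toReal) ∧
      khat ∈ feasSet k₀ l ∧
      (∀ k ∈ feasSet k₀ l, Jobj w f₀ k ≤ Jobj w f₀ khat) ∧
      (∀ k ∈ feasSet k₀ l, (∀ k' ∈ feasSet k₀ l, Jobj w f₀ k' ≤ Jobj w f₀ k) →
        k = khat) := by

  classical
  have hWm : StronglyMeasurable (⇑w) := Lp.stronglyMeasurable w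
  have hWmem : MemLp (⇑w) 2 μ01 := Lp.memLp w
  have hFm : StronglyMeasurable (⇑f₀) := Lp.stronglyMeasurable f₀
  have hFmem : MemLp (⇑f₀) 2 μ01 := Lp.memLp f₀
  set k₀m := hk₀L2.1.mk k₀ with hk₀m_def
  have hk₀ae : k₀ =ᵐ[ν01] k₀m := hk₀L2.1.ae_eq_mk
  set F' : Set (ℝ × ℝ) :=
    (Set.Icc (0 : ℝ) 1 ×ˢ Set.Icc (0 : ℝ) 1) ∩ k₀m ⁻¹' Set.Ici l with hF'def
  have hF' : MeasurableSet F' :=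
    (measurableSet_Icc.prod measurableSet_Icc).inter
      (hk₀L2.1.stronglyMeasurable_mk.measurable measurableSet_Ici)
  have hFiff : ∀ᵐ p ∂ν01, (p ∈ Fset k₀ l ↔ p ∈ F') := by
    filter_upwards [hk₀ae] with p hp
    simp only [Fset, Set.mem_setOf_eq, hF'def, Set.mem_inter_iff, Set.mem_preimage,
      Set.mem_Ici, hp]
  have hsecae : ∀ᵐ y ∂μ01, Fsec k₀ l y =ᵐ[μ01] sec F' y := by
    filter_upwards [ae_swap hFiff] with y hy
    exact Filter.eventuallyEq_set.mpr hy
  have hMMeq : Mopt k₀ l f₀ w =ᵐ[ν01] MM F' ⇑f₀ ⇑w := by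
    filter_upwards [hFiff, ae_snd hsecae] with p hpF hpy
    have hsec_int : ∫ z in Fsec k₀ l p.2, (w : ℝ → ℝ) z ∂μ01
        = ∫ z in sec F' p.2, (w : ℝ → ℝ) z ∂μ01 := setIntegral_congr_set hpy
    have hsec_meas : μ01 (Fsec k₀ l p.2) = μ01 (sec F' p.2) := measure_congr hpy
    unfold Mopt MM Gc
    by_cases h : p ∈ Fset k₀ l
    · rw [Set.indicator_of_mem h, Set.indicator_of_mem (hpF.mp h), hsec_int, hsec_meas]
    · rw [Set.indicator_of_notMem h, Set.indicator_of_notMem (fun hc => h (hpF.mpr hc))]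
  have hMmem : MemLp (Mopt k₀ l f₀ w) 2 ν01 :=
    (mem_MM hF' hWm hWmem hFm hFmem).ae_eq hMMeq.symm
  set Mlp : Lp ℝ 2 ν01 := hMmem.toLp _ with hMlpdef
  have hMco : ⇑Mlp =ᵐ[ν01] Mopt k₀ l f₀ w := hMmem.coeFn_toLp
  set α : ℝ := (eLpNorm (Mopt k₀ l f₀ w) 2 ν01).toReal with hαdef
  have hα_norm : ‖Mlp‖ = α := Lp.norm_toLp _ _
  -- positivity
  have hΞIcc : Ξ' ⊆ Set.Icc (0 : ℝ) 1 := fun y hy => (hΞ'sub hy).1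
  have hμΞ : 0 < μ01 Ξ' := by
    rw [μ01, Measure.restrict_apply' measurableSet_Icc,
      Set.inter_eq_self_of_subset_left hΞIcc]
    exact hΞ'pos
  have hne : ¬ (MM F' ⇑f₀ ⇑w =ᵐ[ν01] 0) := by
    intro hzero
    have hzero' : ∀ᵐ p ∂ν01, MM F' ⇑f₀ ⇑w p = 0 := by
      filter_upwards [hzero] with p hp; simpa using hp
    have hae := (ae_swap hzero').and hsecae
    have hex : ∃ y, y ∈ Ξ' ∧ ((∀ᵐ x ∂μ01, MM F' ⇑f₀ ⇑w (x, y) = 0) ∧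
        Fsec k₀ l y =ᵐ[μ01] sec F' y) := by
      by_contra hcon
      push_neg at hcon
      have hsubset : Ξ' ⊆ {y | ¬ ((∀ᵐ x ∂μ01, MM F' ⇑f₀ ⇑w (x, y) = 0) ∧
          Fsec k₀ l y =ᵐ[μ01] sec F' y)} := fun y hy hP => hcon y hy hP.1 hP.2
      exact hμΞ.ne' (measure_mono_null hsubset (ae_iff.mp hae))
    obtain ⟨y, hyΞ, hy1, hy2⟩ := hex
    have f₀pos := hf₀pos y hyΞ
    set s := sec F' y with hsdef
    set c₀ := Gc F' ⇑w y with hc₀def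
    have hys : ∀ᵐ x ∂μ01, x ∈ s → (w : ℝ → ℝ) x = c₀ := by
      filter_upwards [hy1] with x hx hxs
      rw [show MM F' ⇑f₀ ⇑w (x, y)
          = s.indicator (fun x' => f₀ y * ((w : ℝ → ℝ) x' - c₀)) x from
          indicator_section _ x y, Set.indicator_of_mem hxs] at hx
      rcases mul_eq_zero.mp hx with h | h
      · exact absurd h f₀pos.ne'
      · linarith [sub_eq_zero.mp h]
    have hposEq : ∫ x in Fsec k₀ l y, max ((w : ℝ → ℝ) x) 0 ∂μ01
        = ∫ x in s, max ((w : ℝ → ℝ) x) 0 ∂μ01 := setIntegral_congr_set hy2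
    have hnegEq : ∫ x in Fsec k₀ l y, max (-(w : ℝ → ℝ) x) 0 ∂μ01
        = ∫ x in s, max (-(w : ℝ → ℝ) x) 0 ∂μ01 := setIntegral_congr_set hy2
    have hplus : ∫ x in s, max ((w : ℝ → ℝ) x) 0 ∂μ01 = max c₀ 0 * (μ01 s).toReal := by
      rw [setIntegral_congr_ae (sec_meas hF' y)
        (by filter_upwards [hys] with x hx hxs; rw [hx hxs] :
          ∀ᵐ x ∂μ01, x ∈ s → max ((w : ℝ → ℝ) x) 0 = max c₀ 0), setIntegral_const,
        smul_eq_mul, mul_comm, measureReal_def]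
    have hminus : ∫ x in s, max (-(w : ℝ → ℝ) x) 0 ∂μ01
        = max (-c₀) 0 * (μ01 s).toReal := by
      rw [setIntegral_congr_ae (sec_meas hF' y)
        (by filter_upwards [hys] with x hx hxs; rw [hx hxs] :
          ∀ᵐ x ∂μ01, x ∈ s → max (-(w : ℝ → ℝ) x) 0 = max (-c₀) 0), setIntegral_const,
        smul_eq_mul, mul_comm, measureReal_def]
    have h1 : 0 < max c₀ 0 * (μ01 s).toReal := by
      have := hwpos y hyΞ; rw [hposEq, hplus] at this; exact this
    have h2 : 0 < max (-c₀) 0 * (μ01 s).toReal := by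
      have := hwneg y hyΞ
      rw [show (fun x => max (-((w : ℝ → ℝ) x)) 0) = fun x => max (-(w : ℝ → ℝ) x) 0 from
        rfl] at this
      rw [hnegEq, hminus] at this; exact this
    have hc₀pos : 0 < c₀ := by
      rcases lt_or_ge 0 c₀ with h | h
      · exact h
      · rw [max_eq_right h, zero_mul] at h1; exact absurd h1 (lt_irrefl 0)
    have hc₀neg : 0 < -c₀ := by
      rcases lt_or_ge 0 (-c₀) with h | h
      · exact h
      · rw [max_eq_right h, zero_mul] at h2; exact absurd h2 (lt_irrefl 0)
    linarith
  have hα_pos : 0 < α := by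
    refine ENNReal.toReal_pos ?_ hMmem.2.ne
    intro h0
    exact hne (hMMeq.symm.trans ((eLpNorm_eq_zero_iff hMmem.1 (by norm_num)).mp h0))
  set khat : Lp ℝ 2 ν01 := α⁻¹ • Mlp with hkhatdef
  have hkco : ∀ᵐ p ∂ν01, khat p = Mopt k₀ l f₀ w p / α := by
    filter_upwards [Lp.coeFn_smul α⁻¹ Mlp, hMco] with p h1 h2
    show (⇑(α⁻¹ • Mlp) : ℝ × ℝ → ℝ) p = _
    rw [h1]
    simp [h2, div_eq_inv_mul]
  have hknorm : ‖khat‖ = 1 := by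
    rw [hkhatdef, norm_smul, hα_norm, norm_inv, Real.norm_eq_abs,
      abs_of_nonneg hα_pos.le, inv_mul_cancel₀ hα_pos.ne']
  have hkMM : ⇑khat =ᵐ[ν01] fun p => α⁻¹ * MM F' ⇑f₀ ⇑w p := by
    filter_upwards [hkco, hMMeq] with p h1 h2
    rw [h1, h2, div_eq_inv_mul]
  -- khat feasibility
  have hkfeas : khat ∈ feasSet k₀ l := by
    refine ⟨?_, ?_, hknorm⟩
    · filter_upwards [ae_swap hkMM] with y hy
      rw [integral_congr_ae hy, integral_const_mul, int_sec_MM hF' hWmem y, mul_zero]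
    · filter_upwards [hkco] with p h1 h2
      rw [h1, Mopt, Set.indicator_of_notMem h2, zero_div]
  -- inner product identity
  have hinner : ∀ k : Lp ℝ 2 ν01, (∀ᵐ y ∂μ01, ∫ x, k (x, y) ∂μ01 = 0) →
      (∀ᵐ p ∂ν01, p ∉ Fset k₀ l → k p = 0) → ⟪Mlp, k⟫ = Jobj ⇑w ⇑f₀ k := by
    intro k hk0 hkF
    have hkF' : ∀ᵐ p ∂ν01, p ∉ F' → k p = 0 := by
      filter_upwards [hkF, hFiff] with p h1 h2 h3
      exact h1 (fun hc => h3 (h2.mp hc))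
    have h1 : ⟪Mlp, k⟫ = ∫ p, Mlp p * k p ∂ν01 := by
      rw [L2.inner_def]
      exact integral_congr_ae (Filter.Eventually.of_forall fun p => by
        simp [RCLike.inner_apply, mul_comm])
    rw [h1, integral_congr_ae (g := fun p => MM F' ⇑f₀ ⇑w p * k p)
      (by filter_upwards [hMco, hMMeq] with p ha hb; rw [ha, hb]),
      J_eq hF' hWm hWmem hFm hFmem k hk0 hkF']
    rfl
  have hJkhat : Jobj ⇑w ⇑f₀ khat = α := by
    rw [← hinner khat hkfeas.1 hkfeas.2.1, hkhatdef, real_inner_smul_right,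
      real_inner_self_eq_norm_sq, hα_norm]
    field_simp
  refine ⟨hα_pos, khat, hkco, hkfeas, ?_, ?_⟩
  · intro k hk
    rw [hJkhat, ← hinner k hk.1 hk.2.1]
    calc ⟪Mlp, k⟫ ≤ ‖Mlp‖ * ‖k‖ := real_inner_le_norm _ _
      _ = α := by rw [hα_norm, hk.2.2, mul_one]
  · intro k hk hmax
    have hJk : Jobj ⇑w ⇑f₀ k = α := by
      have h1 : Jobj ⇑w ⇑f₀ khat ≤ Jobj ⇑w ⇑f₀ k := hmax khat hkfeas
      have h2 : Jobj ⇑w ⇑f₀ k ≤ α := by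
        rw [← hinner k hk.1 hk.2.1]
        calc ⟪Mlp, k⟫ ≤ ‖Mlp‖ * ‖k‖ := real_inner_le_norm _ _
          _ = α := by rw [hα_norm, hk.2.2, mul_one]
      rw [hJkhat] at h1
      linarith
    have hin : ⟪Mlp, k⟫ = ‖Mlp‖ * ‖k‖ := by
      rw [hinner k hk.1 hk.2.1, hJk, hα_norm, hk.2.2, mul_one]
    have heq := inner_eq_norm_mul_iff_real.mp hin
    rw [hk.2.2, one_smul, hα_norm] at heq
    show k = α⁻¹ • Mlp
    rw [heq, smul_smul, inv_mul_cancel₀ hα_pos.ne', one_smul]
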